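/- Let A and B be n×n Hermitian matrices with empirical spectral CDFs F_A and F_B. Then L(F_A, F_B)³ ≤ (1/n)·tr((A − B)²), where L denotes the Lévy metric on distribution functions. -/

import Mathlib

open Finset

/-- CDF of the empirical spectral distribution of a Hermitian matrix. -/
noncomputable def esdCDF {n : ℕ} {A : Matrix (Fin n) (Fin n) ℂ}
    (hA : A.IsHermitian) (x : ℝ) : ℝ :=
  ((Finset.univ.filter (fun i => hA.eigenvalues i ≤ x)).card : ℝ) / n

/-- The Lévy distance between two distribution functions. -/
noncomputable def levyDist (F G : ℝ → ℝ) : ℝ :=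
  sInf {ε : ℝ | 0 < ε ∧ ∀ x, F (x - ε) - ε ≤ G x ∧ G x ≤ F (x + ε) + ε}

section Aux
open Matrix

lemma card_filter_comp_perm {n : ℕ} (σ : Equiv.Perm (Fin n)) (p : Fin n → Prop) [DecidablePred p] :
    (univ.filter fun i => p (σ i)).card = (univ.filter p).card := by
  apply Finset.card_bij' (fun i _ => σ i) (fun j _ => σ.symm j) <;> simp

lemma monotone_filter_le_iff {n : ℕ} {f : Fin n → ℝ} (hf : Monotone f) (x : ℝ) (i : Fin n) :
    f i ≤ x ↔ (i : ℕ) < (univ.filter fun j => f j ≤ x).card := by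
  constructor
  · intro hi
    have hsub : Finset.Iic i ⊆ univ.filter fun j => f j ≤ x := by
      intro j hj
      simp only [Finset.mem_Iic] at hj
      simp only [mem_filter, mem_univ, true_and]
      exact le_trans (hf hj) hi
    have := Finset.card_le_card hsub
    rw [Fin.card_Iic] at this
    omega
  · intro hi
    by_contra hx
    have hsub : (univ.filter fun j => f j ≤ x) ⊆ Finset.Iio i := by
      intro j hj
      simp only [mem_filter, mem_univ, true_and] at hj
      simp only [Finset.mem_Iio]
      by_contra hj'
      exact hx (le_trans (hf (not_lt.1 hj')) hj)
    have := Finset.card_le_card hsub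
    rw [Fin.card_Iio] at this
    omega

lemma count_step {n : ℕ} {f g : Fin n → ℝ} (hf : Monotone f) (hg : Monotone g)
    {ε : ℝ} (hε : 0 < ε) (hsum : ∑ i, (f i - g i) ^ 2 < n * ε ^ 3) (y : ℝ) :
    ((univ.filter fun i => g i ≤ y).card : ℝ) / n
      ≤ ((univ.filter fun i => f i ≤ y + ε).card : ℝ) / n + ε := by
  rcases Nat.eq_zero_or_pos n with rfl | hn
  · simp [hε.le]
  set k := (univ.filter fun i => g i ≤ y).card with hk
  set m := (univ.filter fun i => f i ≤ y + ε).card with hm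
  rcases le_or_gt k m with h | h
  · have : (k : ℝ) / n ≤ (m : ℝ) / n := by
      apply div_le_div_of_nonneg_right ?_ (by positivity)
      exact_mod_cast h
    linarith
  · -- m < k
    set S : Finset (Fin n) := univ.filter fun i => m ≤ (i : ℕ) ∧ (i : ℕ) < k with hS
    have hkn : k ≤ n := by
      calc k ≤ univ.card := Finset.card_le_card (filter_subset _ _)
      _ = n := by simp
    have hcardS : S.card = k - m := by
      rw [hS]
      have hmap : (filter (fun i : Fin n => m ≤ (i : ℕ) ∧ (i : ℕ) < k) univ).map
          Fin.valEmbedding = Finset.Ico m k := by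
        ext j
        simp only [Finset.mem_map, mem_filter, mem_univ, true_and, Fin.valEmbedding_apply,
          Finset.mem_Ico]
        constructor
        · rintro ⟨i, ⟨h1, h2⟩, rfl⟩; exact ⟨h1, h2⟩
        · rintro ⟨h1, h2⟩
          exact ⟨⟨j, lt_of_lt_of_le h2 hkn⟩, ⟨h1, h2⟩, rfl⟩
      have := congrArg Finset.card hmap
      rw [Finset.card_map] at this
      rw [this, Nat.card_Ico]
    have hterm : ∀ i ∈ S, ε ^ 2 ≤ (f i - g i) ^ 2 := by
      intro i hi
      simp only [hS, mem_filter, mem_univ, true_and] at hi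
      have hgi : g i ≤ y := (monotone_filter_le_iff hg y i).2 (by omega)
      have hfi : ¬ f i ≤ y + ε := by
        intro hfi
        have := (monotone_filter_le_iff hf (y + ε) i).1 hfi
        omega
      push_neg at hfi
      have : ε ≤ f i - g i := by linarith
      exact pow_le_pow_left₀ hε.le this 2
    have hlow : (S.card : ℝ) * ε ^ 2 ≤ ∑ i, (f i - g i) ^ 2 := by
      calc (S.card : ℝ) * ε ^ 2 = ∑ _i ∈ S, ε ^ 2 := by rw [Finset.sum_const]; ring
      _ ≤ ∑ i ∈ S, (f i - g i) ^ 2 := Finset.sum_le_sum hterm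
      _ ≤ ∑ i, (f i - g i) ^ 2 :=
          Finset.sum_le_sum_of_subset_of_nonneg (subset_univ _) (fun i _ _ => sq_nonneg _)
    have hkm : ((k - m : ℕ) : ℝ) * ε ^ 2 < (n : ℝ) * ε * ε ^ 2 := by
      rw [← hcardS]
      calc (S.card : ℝ) * ε ^ 2 ≤ ∑ i, (f i - g i) ^ 2 := hlow
      _ < n * ε ^ 3 := hsum
      _ = (n : ℝ) * ε * ε ^ 2 := by ring
    have hkm' : ((k : ℝ) - m) < n * ε := by
      have h2 : (0 : ℝ) < ε ^ 2 := by positivity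
      have := (mul_lt_mul_iff_of_pos_right h2).1 hkm
      rw [Nat.cast_sub h.le] at this
      linarith
    rw [div_add' _ _ _ (by positivity : (n:ℝ) ≠ 0)]
    apply div_le_div_of_nonneg_right ?_ (by positivity)
    linarith

lemma sum_mul_mul_doublyStochastic_le {n : ℕ} {a b : Fin n → ℝ} (ha : Monotone a)
    (hb : Monotone b) {S : Matrix (Fin n) (Fin n) ℝ} (hS : S ∈ doublyStochastic ℝ (Fin n)) :
    ∑ i, ∑ j, a i * b j * S i j ≤ ∑ i, a i * b i := by
  obtain ⟨w, hw0, hw1, hwS⟩ := exists_eq_sum_perm_of_mem_doublyStochastic hS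
  have key : ∀ σ : Equiv.Perm (Fin n), ∑ i, a i * b (σ i) ≤ ∑ i, a i * b i := fun σ => by
    simpa [smul_eq_mul] using (ha.monovary hb).sum_smul_comp_perm_le_sum_smul (σ := σ)
  have hrow : ∀ i, ∑ j, a i * b j * S i j = ∑ σ : Equiv.Perm (Fin n), w σ * (a i * b (σ i)) := by
    intro i
    rw [← hwS]
    simp only [Matrix.sum_apply, Matrix.smul_apply, Equiv.Perm.permMatrix,
      PEquiv.toMatrix_apply, Equiv.toPEquiv_apply, Option.mem_def, Option.some.injEq,
      smul_eq_mul, mul_ite, mul_one, mul_zero, Finset.mul_sum]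
    rw [Finset.sum_comm]
    apply Finset.sum_congr rfl
    intro σ _
    simp [Finset.sum_ite_eq, mul_comm, mul_assoc, mul_left_comm]
  calc ∑ i, ∑ j, a i * b j * S i j
      = ∑ σ : Equiv.Perm (Fin n), w σ * ∑ i, a i * b (σ i) := by
        simp only [hrow, Finset.mul_sum]
        rw [Finset.sum_comm]
    _ ≤ ∑ σ : Equiv.Perm (Fin n), w σ * ∑ i, a i * b i :=
        Finset.sum_le_sum fun σ _ => mul_le_mul_of_nonneg_left (key σ) (hw0 σ)
    _ = ∑ i, a i * b i := by rw [← Finset.sum_mul, hw1, one_mul]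

lemma normSq_mem_doublyStochastic {n : ℕ} {W : Matrix (Fin n) (Fin n) ℂ}
    (hW : W ∈ Matrix.unitaryGroup (Fin n) ℂ) :
    Matrix.of (fun p q => (Complex.normSq (W p q) : ℝ)) ∈ doublyStochastic ℝ (Fin n) := by
  rw [mem_doublyStochastic_iff_sum]
  refine ⟨fun i j => Complex.normSq_nonneg _, fun i => ?_, fun j => ?_⟩
  · have h1 : W * star W = 1 := (Matrix.mem_unitaryGroup_iff).1 hW
    have h2 := congrArg (fun M => (M i i).re) h1
    simp only [Matrix.mul_apply, Matrix.one_apply_eq, Complex.one_re] at h2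
    rw [← h2, Complex.re_sum]
    apply Finset.sum_congr rfl
    intro q _
    rw [Matrix.of_apply, Matrix.star_apply,
      show star (W i q) = starRingEnd ℂ (W i q) from rfl, Complex.mul_conj]
    simp
  · have h1 : star W * W = 1 := (Matrix.mem_unitaryGroup_iff').1 hW
    have h2 := congrArg (fun M => (M j j).re) h1
    simp only [Matrix.mul_apply, Matrix.one_apply_eq, Complex.one_re] at h2
    rw [← h2, Complex.re_sum]
    apply Finset.sum_congr rfl
    intro q _
    rw [Matrix.of_apply, Matrix.star_apply,
      show star (W q j) = starRingEnd ℂ (W q j) from rfl, mul_comm, Complex.mul_conj]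
    simp

lemma trace_diag_conj {n : ℕ} (lam mu : Fin n → ℝ) (W : Matrix (Fin n) (Fin n) ℂ) :
    Matrix.trace (Matrix.diagonal (Complex.ofReal ∘ lam) *
        (W * (Matrix.diagonal (Complex.ofReal ∘ mu) * star W)))
      = ((∑ p, ∑ q, lam p * mu q * Complex.normSq (W p q) : ℝ) : ℂ) := by
  rw [Matrix.trace]
  push_cast
  apply Finset.sum_congr rfl
  intro p _
  rw [Matrix.diag_apply, Matrix.diagonal_mul, Matrix.mul_apply, Finset.mul_sum]
  apply Finset.sum_congr rfl
  intro q _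
  rw [Matrix.diagonal_mul, Matrix.star_apply,
    show star (W p q) = starRingEnd ℂ (W p q) from rfl]
  have : (W p q) * starRingEnd ℂ (W p q) = (Complex.normSq (W p q) : ℂ) :=
    Complex.mul_conj _
  calc (lam p : ℂ) * (W p q * ((mu q : ℂ) * starRingEnd ℂ (W p q)))
      = (lam p : ℂ) * (mu q : ℂ) * (W p q * starRingEnd ℂ (W p q)) := by ring
    _ = (lam p : ℂ) * (mu q : ℂ) * (Complex.normSq (W p q) : ℂ) := by rw [this]
    _ = _ := by push_cast; ring

lemma trace_mul_hermitian_re {n : ℕ} {A B : Matrix (Fin n) (Fin n) ℂ}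
    (hA : A.IsHermitian) (hB : B.IsHermitian) :
    (Matrix.trace (A * B)).re = ∑ p, ∑ q, hA.eigenvalues p * hB.eigenvalues q *
      Complex.normSq ((star (hA.eigenvectorUnitary : Matrix (Fin n) (Fin n) ℂ) *
        (hB.eigenvectorUnitary : Matrix (Fin n) (Fin n) ℂ)) p q) := by
  set U := (hA.eigenvectorUnitary : Matrix (Fin n) (Fin n) ℂ) with hU
  set V := (hB.eigenvectorUnitary : Matrix (Fin n) (Fin n) ℂ) with hV
  set Dl := Matrix.diagonal (Complex.ofReal ∘ hA.eigenvalues) with hDl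
  set Dm := Matrix.diagonal (Complex.ofReal ∘ hB.eigenvalues) with hDm
  have key : Matrix.trace (A * B)
      = Matrix.trace (Dl * ((star U * V) * (Dm * star (star U * V)))) := by
    conv_lhs => rw [hA.spectral_theorem, hB.spectral_theorem]
    have hW : (star U * V) * (Dm * star (star U * V))
        = star U * (V * (Dm * (star V * U))) := by
      rw [Matrix.star_mul, star_star, Matrix.mul_assoc]
    rw [hW]
    simp only [Unitary.conjStarAlgAut_apply, Matrix.mul_assoc]
    rw [Matrix.trace_mul_comm]
    simp only [Matrix.mul_assoc]
    rfl
  rw [key, trace_diag_conj, Complex.ofReal_re]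

lemma trace_sq_hermitian_re {n : ℕ} {A : Matrix (Fin n) (Fin n) ℂ} (hA : A.IsHermitian) :
    (Matrix.trace (A * A)).re = ∑ p, hA.eigenvalues p ^ 2 := by
  rw [trace_mul_hermitian_re hA hA]
  have h1 : star (hA.eigenvectorUnitary : Matrix (Fin n) (Fin n) ℂ) *
      (hA.eigenvectorUnitary : Matrix (Fin n) (Fin n) ℂ) = 1 :=
    (Matrix.mem_unitaryGroup_iff').1 hA.eigenvectorUnitary.2
  rw [h1]
  apply Finset.sum_congr rfl
  intro p _
  rw [Finset.sum_eq_single p]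
  · simp [Matrix.one_apply_eq, sq]
  · intro q _ hq
    simp [Matrix.one_apply_ne' hq]
  · simp

lemma hoffman_wielandt_sorted {n : ℕ} {A B : Matrix (Fin n) (Fin n) ℂ}
    (hA : A.IsHermitian) (hB : B.IsHermitian)
    (σ τ : Equiv.Perm (Fin n))
    (hfm : Monotone (hA.eigenvalues ∘ σ)) (hgm : Monotone (hB.eigenvalues ∘ τ)) :
    ∑ i, (hA.eigenvalues (σ i) - hB.eigenvalues (τ i)) ^ 2
      ≤ (Matrix.trace ((A - B) ^ 2)).re := by
  set U := (hA.eigenvectorUnitary : Matrix (Fin n) (Fin n) ℂ)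
  set V := (hB.eigenvectorUnitary : Matrix (Fin n) (Fin n) ℂ)
  set W := star U * V with hWdef
  have hWu : W ∈ Matrix.unitaryGroup (Fin n) ℂ :=
    mul_mem (Unitary.star_mem hA.eigenvectorUnitary.2) hB.eigenvectorUnitary.2
  -- the cross term
  have hcross : (Matrix.trace (A * B)).re
      ≤ ∑ i, hA.eigenvalues (σ i) * hB.eigenvalues (τ i) := by
    rw [trace_mul_hermitian_re hA hB]
    have hS' : Matrix.of (fun p q => (Complex.normSq (W (σ p) (τ q)) : ℝ))
        ∈ doublyStochastic ℝ (Fin n) := by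
      have hS := normSq_mem_doublyStochastic hWu
      rw [mem_doublyStochastic_iff_sum] at hS ⊢
      obtain ⟨h0, hr, hc⟩ := hS
      refine ⟨fun i j => h0 _ _, fun i => ?_, fun j => ?_⟩
      · rw [← hr (σ i)]
        exact Fintype.sum_equiv τ _ _ (fun q => rfl)
      · rw [← hc (τ j)]
        exact Fintype.sum_equiv σ _ _ (fun q => rfl)
    have hre : ∑ p, ∑ q, hA.eigenvalues p * hB.eigenvalues q * Complex.normSq (W p q)
        = ∑ p, ∑ q, (hA.eigenvalues ∘ σ) p * (hB.eigenvalues ∘ τ) q *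
            (Matrix.of (fun p q => (Complex.normSq (W (σ p) (τ q)) : ℝ))) p q := by
      rw [← Equiv.sum_comp σ]
      apply Finset.sum_congr rfl
      intro p _
      rw [← Equiv.sum_comp τ]
      rfl
    rw [hre]
    exact sum_mul_mul_doublyStochastic_le hfm hgm hS'
  -- expand the square
  have hexp : (Matrix.trace ((A - B) ^ 2)).re
      = (Matrix.trace (A * A)).re + (Matrix.trace (B * B)).re
        - 2 * (Matrix.trace (A * B)).re := by
    have : (A - B) ^ 2 = A * A - A * B - B * A + B * B := by
      rw [sq]; noncomm_ring
    rw [this]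
    simp only [Matrix.trace_add, Matrix.trace_sub, Complex.add_re, Complex.sub_re]
    rw [Matrix.trace_mul_comm B A]
    ring
  have hA2 : (Matrix.trace (A * A)).re = ∑ i, hA.eigenvalues (σ i) ^ 2 := by
    rw [trace_sq_hermitian_re hA, ← Equiv.sum_comp σ (fun i => hA.eigenvalues i ^ 2)]
  have hB2 : (Matrix.trace (B * B)).re = ∑ i, hB.eigenvalues (τ i) ^ 2 := by
    rw [trace_sq_hermitian_re hB, ← Equiv.sum_comp τ (fun i => hB.eigenvalues i ^ 2)]
  have hexpand : ∑ i, (hA.eigenvalues (σ i) - hB.eigenvalues (τ i)) ^ 2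
      = ∑ i, hA.eigenvalues (σ i) ^ 2 + ∑ i, hB.eigenvalues (τ i) ^ 2
        - 2 * ∑ i, hA.eigenvalues (σ i) * hB.eigenvalues (τ i) := by
    rw [← Finset.sum_add_distrib, Finset.mul_sum, ← Finset.sum_sub_distrib]
    apply Finset.sum_congr rfl
    intro i _
    ring
  rw [hexpand, hexp, hA2, hB2]
  linarith

end Aux

/-- Perturbation inequality (Bai–Silverstein Theorem A.41): for Hermitian `A`, `B`,
`L(F_A, F_B)³ ≤ (1/n)·tr((A − B)²)`. -/
theorem perturbation_inequality {n : ℕ} {A B : Matrix (Fin n) (Fin n) ℂ}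
    (hA : A.IsHermitian) (hB : B.IsHermitian) :
    levyDist (esdCDF hA) (esdCDF hB) ^ 3
      ≤ (Matrix.trace ((A - B) ^ 2)).re / n := by
  rcases Nat.eq_zero_or_pos n with rfl | hn
  · -- degenerate case n = 0
    have h0 : ∀ {C : Matrix (Fin 0) (Fin 0) ℂ} (hC : C.IsHermitian), esdCDF hC = fun _ => 0 := by
      intro C hC; funext x; unfold esdCDF; simp
    have hset : {ε : ℝ | 0 < ε ∧ ∀ x, esdCDF hA (x - ε) - ε ≤ esdCDF hB x ∧
        esdCDF hB x ≤ esdCDF hA (x + ε) + ε} = Set.Ioi 0 := by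
      ext ε
      simp only [h0 hA, h0 hB, Set.mem_setOf_eq, Set.mem_Ioi]
      constructor
      · exact fun h => h.1
      · intro h; exact ⟨h, fun x => ⟨by linarith, by linarith⟩⟩
    rw [levyDist, hset, csInf_Ioi]
    simp [Matrix.trace]
  -- main case
  set σ := Tuple.sort hA.eigenvalues with hσ
  set τ := Tuple.sort hB.eigenvalues with hτ
  set f : Fin n → ℝ := hA.eigenvalues ∘ σ with hfdef
  set g : Fin n → ℝ := hB.eigenvalues ∘ τ with hgdef
  have hfm : Monotone f := Tuple.monotone_sort _
  have hgm : Monotone g := Tuple.monotone_sort _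
  set T : ℝ := (∑ i, (f i - g i) ^ 2) / n with hTdef
  have hT0 : 0 ≤ T := by positivity
  have hFA : ∀ x, esdCDF hA x = ((univ.filter fun i => f i ≤ x).card : ℝ) / n := by
    intro x
    unfold esdCDF
    rw [← card_filter_comp_perm σ (fun i => hA.eigenvalues i ≤ x)]
    rfl
  have hFB : ∀ x, esdCDF hB x = ((univ.filter fun i => g i ≤ x).card : ℝ) / n := by
    intro x
    unfold esdCDF
    rw [← card_filter_comp_perm τ (fun i => hB.eigenvalues i ≤ x)]
    rfl
  set c : ℝ := T ^ ((3 : ℝ)⁻¹) with hcdef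
  have hc0 : 0 ≤ c := Real.rpow_nonneg hT0 _
  have hc3 : c ^ 3 = T := by
    rw [hcdef, ← Real.rpow_natCast (T ^ ((3:ℝ)⁻¹)) 3, ← Real.rpow_mul hT0]
    norm_num
  have hmem : ∀ ε : ℝ, c < ε → ε ∈ {ε : ℝ | 0 < ε ∧ ∀ x,
      esdCDF hA (x - ε) - ε ≤ esdCDF hB x ∧ esdCDF hB x ≤ esdCDF hA (x + ε) + ε} := by
    intro ε hε
    have hε0 : 0 < ε := lt_of_le_of_lt hc0 hε
    have hsum : ∑ i, (f i - g i) ^ 2 < n * ε ^ 3 := by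
      have h1 : c ^ 3 < ε ^ 3 := by
        apply pow_lt_pow_left₀ hε hc0
        norm_num
      rw [hc3, hTdef] at h1
      rw [div_lt_iff₀ (by positivity : (0:ℝ) < n)] at h1
      calc ∑ i, (f i - g i) ^ 2 < ε ^ 3 * n := h1
        _ = n * ε ^ 3 := by ring
    have hsum' : ∑ i, (g i - f i) ^ 2 < n * ε ^ 3 := by
      have : ∑ i, (g i - f i) ^ 2 = ∑ i, (f i - g i) ^ 2 :=
        Finset.sum_congr rfl fun i _ => by ring
      rw [this]; exact hsum
    refine ⟨hε0, fun x => ⟨?_, ?_⟩⟩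
    · have := count_step hgm hfm hε0 hsum' (x - ε)
      rw [sub_add_cancel] at this
      rw [hFA, hFB]
      linarith
    · have := count_step hfm hgm hε0 hsum x
      rw [hFA, hFB]
      linarith
  have hbdd : BddBelow {ε : ℝ | 0 < ε ∧ ∀ x,
      esdCDF hA (x - ε) - ε ≤ esdCDF hB x ∧ esdCDF hB x ≤ esdCDF hA (x + ε) + ε} :=
    ⟨0, fun ε hε => hε.1.le⟩
  have hlevy_le : levyDist (esdCDF hA) (esdCDF hB) ≤ c := by
    apply le_of_forall_pos_le_add
    intro δ hδ
    exact le_trans (csInf_le hbdd (hmem (c + δ) (by linarith))) le_rfl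
  have hlevy_nonneg : 0 ≤ levyDist (esdCDF hA) (esdCDF hB) := by
    rcases Set.eq_empty_or_nonempty {ε : ℝ | 0 < ε ∧ ∀ x,
        esdCDF hA (x - ε) - ε ≤ esdCDF hB x ∧ esdCDF hB x ≤ esdCDF hA (x + ε) + ε} with h | h
    · rw [levyDist, h, Real.sInf_empty]
    · exact le_csInf h fun ε hε => hε.1.le
  have hcube : levyDist (esdCDF hA) (esdCDF hB) ^ 3 ≤ T := by
    rw [← hc3]
    exact pow_le_pow_left₀ hlevy_nonneg hlevy_le 3
  have hHW : T ≤ (Matrix.trace ((A - B) ^ 2)).re / n := by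
    rw [hTdef]
    apply div_le_div_of_nonneg_right ?_ (by positivity)
    exact hoffman_wielandt_sorted hA hB σ τ hfm hgm
  linarith
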